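/- Let E be a finite-dimensional Euclidean space and γ the standard Gaussian measure on E. For every continuous function f : E → ℝ (bounded from below), ∫_E e^{−f} dγ ≤ ∫_E e^{−Sf} dγ. -/

import Mathlib

open MeasureTheory Real

/-- The standard Gaussian probability measure on a finite-dimensional Euclidean
space `E`, given by its density `(2π)^{-dim E/2} e^{-|x|²/2}`. -/
noncomputable def gaussOf (E : Type*) [NormedAddCommGroup E] [InnerProductSpace ℝ E]
    [FiniteDimensional ℝ E] [MeasurableSpace E] [BorelSpace E] : Measure E :=
  volume.withDensity fun x =>
    ENNReal.ofReal ((2 * π) ^ (-(Module.finrank ℝ E : ℝ) / 2) * Real.exp (-‖x‖ ^ 2 / 2))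

/-- The symmetrisation `Sf(x) = inf_u ( ½(f(u+x) + f(u-x)) + ½|u|² )`. -/
noncomputable def Ssym {E : Type*} [NormedAddCommGroup E] (f : E → ℝ) (x : E) : ℝ :=
  ⨅ u : E, ((f (u + x) + f (u - x)) / 2 + ‖u‖ ^ 2 / 2)

open Set ENNReal

/-- One-dimensional Brunn–Minkowski-type inequality for midpoint sets. -/
lemma bm_one_dim {S T U : Set ℝ} (hS : MeasurableSet S) (hT : MeasurableSet T)
    (hSne : S.Nonempty) (hTne : T.Nonempty)
    (hU : ∀ x ∈ S, ∀ y ∈ T, (x + y) / 2 ∈ U) :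
    volume S + volume T ≤ 2 * volume U := by
  obtain ⟨s0, hs0⟩ := hSne
  obtain ⟨t0, ht0⟩ := hTne
  -- key: for nonempty compacts inside S, T
  have key : ∀ K L : Set ℝ, IsCompact K → IsCompact L → K.Nonempty → L.Nonempty →
      K ⊆ S → L ⊆ T → volume K + volume L ≤ 2 * volume U := by
    intro K L hK hL hKne hLne hKS hLT
    set x₀ := sSup K with hx₀def
    set y₀ := sInf L with hy₀def
    have hx₀ : x₀ ∈ K := hK.sSup_mem hKne
    have hy₀ : y₀ ∈ L := hL.sInf_mem hLne
    set P : Set ℝ := (fun y => (x₀ + y) / 2) '' L with hPdef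
    set Q : Set ℝ := (fun x => (x + y₀) / 2) '' K with hQdef
    have hPU : P ⊆ U := by
      rintro _ ⟨y, hy, rfl⟩; exact hU _ (hKS hx₀) _ (hLT hy)
    have hQU : Q ⊆ U := by
      rintro _ ⟨x, hx, rfl⟩; exact hU _ (hKS hx) _ (hLT hy₀)
    have hPQ : P ∩ Q ⊆ {(x₀ + y₀) / 2} := by
      rintro z ⟨⟨y, hy, hz1⟩, ⟨x, hx, hz2⟩⟩
      have hxle : x ≤ x₀ := le_csSup hK.bddAbove hx
      have hyge : y₀ ≤ y := csInf_le hL.bddBelow hy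
      have : x₀ + y = x + y₀ := by
        have := hz1.trans hz2.symm
        linarith
      have hyy : y = y₀ := by linarith
      simp only [mem_singleton_iff, ← hz1, hyy]
    -- P is the image of L under a homothety of ratio 1/2
    have hPh : P = (AffineMap.homothety x₀ (2⁻¹ : ℝ)) '' L := by
      apply image_congr
      intro y _
      simp [AffineMap.homothety_apply]
      ring
    have hQh : Q = (AffineMap.homothety y₀ (2⁻¹ : ℝ)) '' K := by
      apply image_congr
      intro x _
      simp [AffineMap.homothety_apply]
      ring
    have hvolP : volume P = ENNReal.ofReal 2⁻¹ * volume L := by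
      rw [hPh, Measure.addHaar_image_homothety]
      congr 2
      rw [Module.finrank_self, pow_one, abs_of_nonneg] <;> norm_num
    have hvolQ : volume Q = ENNReal.ofReal 2⁻¹ * volume K := by
      rw [hQh, Measure.addHaar_image_homothety]
      congr 2
      rw [Module.finrank_self, pow_one, abs_of_nonneg] <;> norm_num
    have hPmeas : NullMeasurableSet Q volume :=
      ((hK.image (by fun_prop)).isClosed.measurableSet).nullMeasurableSet
    have hdisj : AEDisjoint volume P Q :=
      measure_mono_null hPQ (measure_singleton _)
    have hunion : volume P + volume Q ≤ volume U := by
      rw [← measure_union₀ hPmeas hdisj]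
      exact measure_mono (union_subset hPU hQU)
    have h2 : (2 : ℝ≥0∞) * (ENNReal.ofReal 2⁻¹) = 1 := by
      rw [← ENNReal.ofReal_ofNat, ← ENNReal.ofReal_mul (by norm_num)]
      norm_num
    calc volume K + volume L
        = 2 * (ENNReal.ofReal 2⁻¹ * (volume K + volume L)) := by
          rw [← mul_assoc, h2, one_mul]
      _ = 2 * (volume P + volume Q) := by rw [hvolP, hvolQ]; ring
      _ ≤ 2 * volume U := by gcongr
  -- now use inner regularity
  have hSsup : volume S = ⨆ K : {K : Set ℝ // IsCompact K ∧ K.Nonempty ∧ K ⊆ S}, volume K.1 := by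
    apply le_antisymm
    · rw [hS.measure_eq_iSup_isCompact]
      refine iSup_le fun K => iSup_le fun hKS => iSup_le fun hK => ?_
      refine le_trans (measure_mono (subset_insert s0 K)) ?_
      exact le_iSup_of_le ⟨insert s0 K, hK.insert s0, insert_nonempty _ _,
        insert_subset hs0 hKS⟩ le_rfl
    · exact iSup_le fun K => measure_mono K.2.2.2
  have hTsup : volume T = ⨆ L : {L : Set ℝ // IsCompact L ∧ L.Nonempty ∧ L ⊆ T}, volume L.1 := by
    apply le_antisymm
    · rw [hT.measure_eq_iSup_isCompact]
      refine iSup_le fun L => iSup_le fun hLT => iSup_le fun hL => ?_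
      refine le_trans (measure_mono (subset_insert t0 L)) ?_
      exact le_iSup_of_le ⟨insert t0 L, hL.insert t0, insert_nonempty _ _,
        insert_subset ht0 hLT⟩ le_rfl
    · exact iSup_le fun L => measure_mono L.2.2.2
  rw [hSsup, hTsup]
  have : Nonempty {K : Set ℝ // IsCompact K ∧ K.Nonempty ∧ K ⊆ S} :=
    ⟨⟨{s0}, isCompact_singleton, singleton_nonempty _, singleton_subset_iff.2 hs0⟩⟩
  have : Nonempty {L : Set ℝ // IsCompact L ∧ L.Nonempty ∧ L ⊆ T} :=
    ⟨⟨{t0}, isCompact_singleton, singleton_nonempty _, singleton_subset_iff.2 ht0⟩⟩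
  exact ENNReal.iSup_add_iSup_le fun K L =>
    key K.1 L.1 K.2.1 L.2.1 K.2.2.1 L.2.2.1 K.2.2.2 L.2.2.2

/-- AM-GM in `ℝ≥0∞`: `4ab ≤ (a+b)²`. -/
lemma ennreal_amgm (a b : ℝ≥0∞) : 4 * (a * b) ≤ (a + b) ^ 2 := by
  rcases le_total a b with h | h
  · obtain ⟨d, rfl⟩ := exists_add_of_le h
    calc 4 * (a * (a + d)) = 4 * a ^ 2 + 4 * (a * d) := by ring
      _ ≤ 4 * a ^ 2 + 4 * (a * d) + d ^ 2 := le_self_add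
      _ = (a + (a + d)) ^ 2 := by ring
  · obtain ⟨d, rfl⟩ := exists_add_of_le h
    calc 4 * ((b + d) * b) = 4 * b ^ 2 + 4 * (b * d) := by ring
      _ ≤ 4 * b ^ 2 + 4 * (b * d) + d ^ 2 := le_self_add
      _ = (b + d + b) ^ 2 := by ring

/-- Midpoint Prékopa–Leindler on ℝ, for normalized (`sup = 1`) functions. -/
lemma midPL_real_norm {f g h : ℝ → ℝ}
    (hfm : Measurable f) (hgm : Measurable g) (hhm : Measurable h)
    (hf0 : ∀ x, 0 ≤ f x) (hg0 : ∀ x, 0 ≤ g x) (hh0 : ∀ x, 0 ≤ h x)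
    (hf1 : ∀ x, f x ≤ 1) (hg1 : ∀ x, g x ≤ 1)
    (hfs : ∀ t : ℝ, t < 1 → ∃ x, t < f x) (hgs : ∀ t : ℝ, t < 1 → ∃ y, t < g y)
    (hc : ∀ x y, f x * g y ≤ h ((x + y) / 2) ^ 2) :
    (∫⁻ x, ENNReal.ofReal (f x)) + (∫⁻ x, ENNReal.ofReal (g x)) ≤
      2 * ∫⁻ x, ENNReal.ofReal (h x) := by
  -- layer cake representations
  have hlf := lintegral_eq_lintegral_meas_le volume (ae_of_all _ hf0) hfm.aemeasurable
  have hlg := lintegral_eq_lintegral_meas_le volume (ae_of_all _ hg0) hgm.aemeasurable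
  have hlh := lintegral_eq_lintegral_meas_le volume (ae_of_all _ hh0) hhm.aemeasurable
  rw [hlf, hlg, hlh]
  -- level-set functions
  set F : ℝ → ℝ≥0∞ := fun t => volume {a | t ≤ f a} with hF
  set G : ℝ → ℝ≥0∞ := fun t => volume {a | t ≤ g a} with hG
  set H : ℝ → ℝ≥0∞ := fun t => volume {a | t ≤ h a} with hH
  have hFanti : Antitone F := fun s t hst =>
    measure_mono fun a (ha : t ≤ f a) => le_trans hst ha
  have hGanti : Antitone G := fun s t hst =>
    measure_mono fun a (ha : t ≤ g a) => le_trans hst ha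
  -- on Ioi 1 the f,g integrands vanish
  have hsplit : ∀ (φ : ℝ → ℝ) (hφ1 : ∀ x, φ x ≤ 1),
      (∫⁻ t in Ioi (0:ℝ), volume {a | t ≤ φ a}) =
      ∫⁻ t in Ioo (0:ℝ) 1, volume {a | t ≤ φ a} := by
    intro φ hφ1
    rw [← Ioc_union_Ioi_eq_Ioi (zero_le_one (α := ℝ)),
      lintegral_union measurableSet_Ioi (Ioc_disjoint_Ioi le_rfl)]
    have h2 : (∫⁻ t in Ioi (1:ℝ), volume {a | t ≤ φ a}) = 0 := by
      rw [setLIntegral_congr_fun measurableSet_Ioi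
        (fun t (ht : 1 < t) => ?_), lintegral_zero]
      have : {a | t ≤ φ a} = ∅ := by
        ext a; simp only [mem_setOf_eq, mem_empty_iff_false, iff_false, not_le]
        exact lt_of_le_of_lt (hφ1 a) ht
      simp [this]
    rw [h2, add_zero]
    exact (setLIntegral_congr (Ioo_ae_eq_Ioc (a := (0:ℝ)) (b := 1))).symm
  rw [hsplit f hf1, hsplit g hg1]
  -- pointwise inequality on level sets for t ∈ Ioo 0 1
  have hlevel : ∀ t ∈ Ioo (0:ℝ) 1, F t + G t ≤ 2 * H t := by
    intro t ⟨ht0, ht1⟩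
    apply bm_one_dim (hfm measurableSet_Ici) (hgm measurableSet_Ici)
    · obtain ⟨x, hx⟩ := hfs t ht1; exact ⟨x, hx.le⟩
    · obtain ⟨y, hy⟩ := hgs t ht1; exact ⟨y, hy.le⟩
    · intro x hx y hy
      have : t ^ 2 ≤ h ((x + y) / 2) ^ 2 := by
        calc t ^ 2 ≤ f x * g y := by
              have : t ≤ f x := hx
              have : t ≤ g y := hy
              nlinarith
          _ ≤ _ := hc x y
      exact (pow_le_pow_iff_left₀ ht0.le (hh0 _) (two_ne_zero)).1 this
  -- integrate the level inequality
  have hmono : (∫⁻ t in Ioo (0:ℝ) 1, F t) + (∫⁻ t in Ioo (0:ℝ) 1, G t) ≤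
      2 * ∫⁻ t in Ioi (0:ℝ), H t := by
    calc (∫⁻ t in Ioo (0:ℝ) 1, F t) + (∫⁻ t in Ioo (0:ℝ) 1, G t)
        ≤ ∫⁻ t in Ioo (0:ℝ) 1, (F t + G t) := le_lintegral_add _ _
      _ ≤ ∫⁻ t in Ioo (0:ℝ) 1, 2 * H t := by
          apply lintegral_mono_ae
          exact (ae_restrict_iff' measurableSet_Ioo).2 (ae_of_all _ hlevel)
      _ = 2 * ∫⁻ t in Ioo (0:ℝ) 1, H t := lintegral_const_mul' _ _ (by norm_num)
      _ ≤ 2 * ∫⁻ t in Ioi (0:ℝ), H t := by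
          gcongr
          exact Ioo_subset_Ioi_self
  exact hmono

/-- Midpoint Prékopa–Leindler on ℝ for bounded nonnegative measurable functions. -/
lemma midPL_real_bounded {f g h : ℝ → ℝ} {M : ℝ}
    (hfm : Measurable f) (hgm : Measurable g) (hhm : Measurable h)
    (hf0 : ∀ x, 0 ≤ f x) (hg0 : ∀ x, 0 ≤ g x) (hh0 : ∀ x, 0 ≤ h x)
    (hfM : ∀ x, f x ≤ M) (hgM : ∀ x, g x ≤ M)
    (hc : ∀ x y, f x * g y ≤ h ((x + y) / 2) ^ 2) :
    (∫⁻ x, ENNReal.ofReal (f x)) * (∫⁻ x, ENNReal.ofReal (g x)) ≤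
      (∫⁻ x, ENNReal.ofReal (h x)) ^ 2 := by
  -- the sups
  set A := sSup (range f) with hA
  set B := sSup (range g) with hB
  have hrf : (range f).Nonempty := range_nonempty f
  have hrg : (range g).Nonempty := range_nonempty g
  have hbf : BddAbove (range f) := ⟨M, by rintro _ ⟨x, rfl⟩; exact hfM x⟩
  have hbg : BddAbove (range g) := ⟨M, by rintro _ ⟨x, rfl⟩; exact hgM x⟩
  have hfA : ∀ x, f x ≤ A := fun x => le_csSup hbf ⟨x, rfl⟩
  have hgB : ∀ x, g x ≤ B := fun x => le_csSup hbg ⟨x, rfl⟩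
  have hA0 : 0 ≤ A := le_trans (hf0 0) (hfA 0)
  have hB0 : 0 ≤ B := le_trans (hg0 0) (hgB 0)
  rcases eq_or_lt_of_le hA0 with hA0' | hA0'
  · have : ∀ x, f x = 0 := fun x => le_antisymm (hA0' ▸ hfA x) (hf0 x)
    simp [this]
  rcases eq_or_lt_of_le hB0 with hB0' | hB0'
  · have : ∀ x, g x = 0 := fun x => le_antisymm (hB0' ▸ hgB x) (hg0 x)
    simp [this]
  -- normalized functions
  set C := Real.sqrt (A * B) with hC
  have hC0 : 0 < C := Real.sqrt_pos.2 (mul_pos hA0' hB0')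
  have hC2 : C ^ 2 = A * B := Real.sq_sqrt (mul_pos hA0' hB0').le
  set f₁ : ℝ → ℝ := fun x => f x / A with hf₁
  set g₁ : ℝ → ℝ := fun x => g x / B with hg₁
  set h₁ : ℝ → ℝ := fun x => h x / C with hh₁
  have key := midPL_real_norm (f := f₁) (g := g₁) (h := h₁)
    (hfm.div_const A) (hgm.div_const B) (hhm.div_const C)
    (fun x => div_nonneg (hf0 x) hA0) (fun x => div_nonneg (hg0 x) hB0)
    (fun x => div_nonneg (hh0 x) hC0.le)
    (fun x => div_le_one_of_le₀ (hfA x) hA0)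
    (fun x => div_le_one_of_le₀ (hgB x) hB0)
    (fun t ht => by
      obtain ⟨_, ⟨x, rfl⟩, hx⟩ := exists_lt_of_lt_csSup hrf
        (by simpa [hA] using (mul_lt_of_lt_one_left hA0' ht : t * A < A) |>.trans_eq rfl
          : t * A < A)
      exact ⟨x, (lt_div_iff₀ hA0').2 (by linarith [hx])⟩)
    (fun t ht => by
      obtain ⟨_, ⟨y, rfl⟩, hy⟩ := exists_lt_of_lt_csSup hrg
        ((mul_lt_of_lt_one_left hB0' ht : t * B < B))
      exact ⟨y, (lt_div_iff₀ hB0').2 (by linarith [hy])⟩)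
    (fun x y => by
      have hxy := hc x y
      rw [div_mul_div_comm, div_pow, hC2]
      gcongr)
  -- translate back
  have hfsplit : (∫⁻ x, ENNReal.ofReal (f x)) =
      ENNReal.ofReal A * ∫⁻ x, ENNReal.ofReal (f₁ x) := by
    rw [← lintegral_const_mul' _ _ ENNReal.ofReal_ne_top]
    apply lintegral_congr
    intro x
    rw [← ENNReal.ofReal_mul hA0, mul_comm, div_mul_cancel₀ _ (ne_of_gt hA0')]
  have hgsplit : (∫⁻ x, ENNReal.ofReal (g x)) =
      ENNReal.ofReal B * ∫⁻ x, ENNReal.ofReal (g₁ x) := by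
    rw [← lintegral_const_mul' _ _ ENNReal.ofReal_ne_top]
    apply lintegral_congr
    intro x
    rw [← ENNReal.ofReal_mul hB0, mul_comm, div_mul_cancel₀ _ (ne_of_gt hB0')]
  have hhsplit : (∫⁻ x, ENNReal.ofReal (h x)) =
      ENNReal.ofReal C * ∫⁻ x, ENNReal.ofReal (h₁ x) := by
    rw [← lintegral_const_mul' _ _ ENNReal.ofReal_ne_top]
    apply lintegral_congr
    intro x
    rw [← ENNReal.ofReal_mul hC0.le, mul_comm, div_mul_cancel₀ _ (ne_of_gt hC0)]
  rw [hfsplit, hgsplit, hhsplit]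
  set If := ∫⁻ x, ENNReal.ofReal (f₁ x)
  set Ig := ∫⁻ x, ENNReal.ofReal (g₁ x)
  set Ih := ∫⁻ x, ENNReal.ofReal (h₁ x)
  have hIfg : 4 * (If * Ig) ≤ 4 * Ih ^ 2 := by
    calc 4 * (If * Ig) ≤ (If + Ig) ^ 2 := ennreal_amgm _ _
      _ ≤ (2 * Ih) ^ 2 := by gcongr
      _ = 4 * Ih ^ 2 := by ring
  have hIfg' : If * Ig ≤ Ih ^ 2 :=
    (ENNReal.mul_le_mul_iff_right (by norm_num) (by norm_num)).1 hIfg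
  calc ENNReal.ofReal A * If * (ENNReal.ofReal B * Ig)
      = (ENNReal.ofReal A * ENNReal.ofReal B) * (If * Ig) := by ring
    _ ≤ (ENNReal.ofReal A * ENNReal.ofReal B) * Ih ^ 2 := by gcongr
    _ = (ENNReal.ofReal C * Ih) ^ 2 := by
        rw [mul_pow, ← ENNReal.ofReal_pow hC0.le, hC2, ENNReal.ofReal_mul hA0]

/-- Midpoint Prékopa–Leindler property for a measure and midpoint-type operation. -/
def MidPL {α : Type*} [MeasurableSpace α] (μ : Measure α) (m : α → α → α) : Prop :=
  ∀ f g h : α → ℝ≥0∞, Measurable f → Measurable g → Measurable h →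
    (∀ x y, f x * g y ≤ h (m x y) ^ 2) →
    (∫⁻ x, f x ∂μ) * (∫⁻ x, g x ∂μ) ≤ (∫⁻ x, h x ∂μ) ^ 2

lemma iSup_min_nat (a : ℝ≥0∞) : ⨆ n : ℕ, min a n = a := by
  apply le_antisymm (iSup_le fun n => min_le_left _ _)
  rcases eq_or_ne a ⊤ with rfl | ha
  · have h1 : ⨆ n : ℕ, min (⊤:ℝ≥0∞) n = ⨆ n : ℕ, (n:ℝ≥0∞) := by simp
    rw [h1, ENNReal.iSup_natCast]
  · obtain ⟨n, hn⟩ := ENNReal.exists_nat_gt ha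
    exact le_iSup_of_le n (le_min le_rfl hn.le)

/-- The 1-D midpoint Prékopa–Leindler inequality. -/
lemma midPL_real : MidPL (volume : Measure ℝ) (fun x y => (x + y) / 2) := by
  intro f g h hfm hgm hhm hc
  -- truncation
  have trunc : ∀ n : ℕ,
      (∫⁻ x, min (f x) n) * (∫⁻ x, min (g x) n) ≤ (∫⁻ x, h x) ^ 2 := by
    intro n
    set f' : ℝ → ℝ := fun x => (min (f x) n).toReal with hf'
    set g' : ℝ → ℝ := fun x => (min (g x) n).toReal with hg'
    set h' : ℝ → ℝ := fun x => (min (h x) n).toReal with hh'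
    have hofr : ∀ (φ : ℝ → ℝ≥0∞) x, ENNReal.ofReal ((min (φ x) n).toReal) = min (φ x) n :=
      fun φ x => ENNReal.ofReal_toReal (lt_of_le_of_lt (min_le_right _ _) (by simp)).ne
    have key := midPL_real_bounded (f := f') (g := g') (h := h') (M := n)
      ((hfm.min measurable_const).ennreal_toReal)
      ((hgm.min measurable_const).ennreal_toReal)
      ((hhm.min measurable_const).ennreal_toReal)
      (fun x => ENNReal.toReal_nonneg) (fun x => ENNReal.toReal_nonneg)
      (fun x => ENNReal.toReal_nonneg)
      (fun x => by
        simp only [hf']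
        exact ENNReal.toReal_le_of_le_ofReal (Nat.cast_nonneg n)
          (by simpa using min_le_right (f x) n))
      (fun x => by
        simp only [hg']
        exact ENNReal.toReal_le_of_le_ofReal (Nat.cast_nonneg n)
          (by simpa using min_le_right (g x) n))
      (fun x y => by
        -- pointwise condition after truncation
        have h1 : min (f x) n * min (g y) n ≤ min (h ((x+y)/2)) n ^ 2 := by
          have : min (f x) n * min (g y) n ≤ min (f x * g y) (n * n) :=
            le_min (mul_le_mul' (min_le_left _ _) (min_le_left _ _))
              (mul_le_mul' (min_le_right _ _) (min_le_right _ _))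
          refine le_trans this ?_
          rcases le_total (h ((x+y)/2)) (n : ℝ≥0∞) with hle | hle
          · rw [min_eq_left hle]
            exact le_trans (min_le_left _ _) (hc x y)
          · rw [min_eq_right hle, sq]
            exact min_le_right _ _
        have hfin1 : min (f x) (n : ℝ≥0∞) ≠ ⊤ := (lt_of_le_of_lt (min_le_right _ _) (by simp)).ne
        have hfin2 : min (g y) (n : ℝ≥0∞) ≠ ⊤ := (lt_of_le_of_lt (min_le_right _ _) (by simp)).ne
        have hfin3 : min (h ((x+y)/2)) (n : ℝ≥0∞) ≠ ⊤ :=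
          (lt_of_le_of_lt (min_le_right _ _) (by simp)).ne
        simp only [hf', hg', hh']
        rw [← ENNReal.toReal_mul, ← ENNReal.toReal_pow]
        exact ENNReal.toReal_mono (by simp [hfin3]) h1)
    simp only [hf', hg', hh', hofr f, hofr g, hofr h] at key
    refine le_trans key ?_
    gcongr with x
    exact min_le_left _ _
  -- pass to the limit
  have hmono : ∀ (φ : ℝ → ℝ≥0∞), Monotone fun n : ℕ => ∫⁻ x, min (φ x) n := by
    intro φ i j hij
    exact lintegral_mono fun x => le_min (min_le_left _ _)
      (le_trans (min_le_right _ _) (by exact_mod_cast Nat.cast_le.2 hij))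
  have hlim : ∀ (φ : ℝ → ℝ≥0∞), Measurable φ → (⨆ n : ℕ, ∫⁻ x, min (φ x) n) = ∫⁻ x, φ x := by
    intro φ hφ
    rw [← lintegral_iSup (fun n => hφ.min measurable_const)]
    · exact lintegral_congr fun x => iSup_min_nat _
    · intro i j hij x
      exact le_min (min_le_left _ _)
        (le_trans (min_le_right _ _) (by exact_mod_cast Nat.cast_le.2 hij))
  rw [← hlim f hfm, ← hlim g hgm]
  rw [ENNReal.iSup_mul]
  refine iSup_le fun i => ?_
  rw [ENNReal.mul_iSup]
  refine iSup_le fun j => ?_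
  calc (∫⁻ x, min (f x) i) * ∫⁻ x, min (g x) j
      ≤ (∫⁻ x, min (f x) (max i j : ℕ)) * ∫⁻ x, min (g x) (max i j : ℕ) := by
        exact mul_le_mul' (hmono f (le_max_left i j)) (hmono g (le_max_right i j))
    _ ≤ (∫⁻ x, h x) ^ 2 := trunc _

/-- `MidPL` passes to products. -/
lemma MidPL.prod {α β : Type*} [MeasurableSpace α] [MeasurableSpace β]
    {μ : Measure α} {ν : Measure β} [SigmaFinite μ] [SigmaFinite ν]
    {m : α → α → α} {m' : β → β → β}
    (hμ : MidPL μ m) (hν : MidPL ν m') :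
    MidPL (μ.prod ν) (fun p q => (m p.1 q.1, m' p.2 q.2)) := by
  intro f g h hfm hgm hhm hc
  set F : α → ℝ≥0∞ := fun x => ∫⁻ b, f (x, b) ∂ν with hF
  set G : α → ℝ≥0∞ := fun x => ∫⁻ b, g (x, b) ∂ν with hG
  set H : α → ℝ≥0∞ := fun x => ∫⁻ b, h (x, b) ∂ν with hH
  have hFm : Measurable F := hfm.lintegral_prod_right'
  have hGm : Measurable G := hgm.lintegral_prod_right'
  have hHm : Measurable H := hhm.lintegral_prod_right'
  have hsec : ∀ x y : α, F x * G y ≤ H (m x y) ^ 2 := by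
    intro x y
    exact hν (fun b => f (x, b)) (fun b => g (y, b)) (fun b => h (m x y, b))
      (hfm.comp measurable_prodMk_left) (hgm.comp measurable_prodMk_left)
      (hhm.comp measurable_prodMk_left)
      (fun b b' => hc (x, b) (y, b'))
  have := hμ F G H hFm hGm hHm hsec
  rwa [hF, hG, hH, ← lintegral_prod _ hfm.aemeasurable, ← lintegral_prod _ hgm.aemeasurable,
    ← lintegral_prod _ hhm.aemeasurable] at this

/-- `MidPL` transfers along measure-preserving maps commuting with the midpoint maps. -/
lemma MidPL.transfer {α β : Type*} [MeasurableSpace α] [MeasurableSpace β]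
    {μ : Measure α} {ν : Measure β} {m : α → α → α} {m' : β → β → β}
    (hμ : MidPL μ m) {e : α → β} (he : MeasurePreserving e μ ν)
    (hm : ∀ x y, e (m x y) = m' (e x) (e y)) : MidPL ν m' := by
  intro f g h hfm hgm hhm hc
  have h1 := hμ (fun x => f (e x)) (fun x => g (e x)) (fun x => h (e x))
    (hfm.comp he.measurable) (hgm.comp he.measurable) (hhm.comp he.measurable)
    (fun x y => by show f (e x) * g (e y) ≤ h (e (m x y)) ^ 2; rw [hm]; exact hc (e x) (e y))
  rwa [he.lintegral_comp hfm, he.lintegral_comp hgm, he.lintegral_comp hhm] at h1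

/-- `MidPL` on `Fin n → ℝ`, with the midpoint map. -/
lemma midPL_pi (n : ℕ) :
    MidPL (volume : Measure (Fin n → ℝ)) (fun x y => (2⁻¹ : ℝ) • (x + y)) := by
  induction n with
  | zero =>
      intro f g h hfm hgm hhm hc
      have huniv : (volume : Measure (Fin 0 → ℝ)) univ = 1 := by
        rw [volume_pi, Measure.pi_univ]; simp
      have hconst : ∀ (φ : (Fin 0 → ℝ) → ℝ≥0∞), ∫⁻ x, φ x = φ 0 := by
        intro φ
        have : φ = fun _ => φ 0 := funext fun x => congrArg φ (Subsingleton.elim _ _)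
        rw [this, lintegral_const, huniv, mul_one]
      rw [hconst f, hconst g, hconst h]
      have := hc 0 0
      simpa [Subsingleton.elim ((2⁻¹ : ℝ) • ((0 : Fin 0 → ℝ) + 0)) (0 : Fin 0 → ℝ)] using this
  | succ n ih =>
      have hprod := midPL_real.prod ih
      have hmp := measurePreserving_piFinSuccAbove (fun _ : Fin (n+1) => (volume : Measure ℝ)) 0
      set e := MeasurableEquiv.piFinSuccAbove (fun _ : Fin (n+1) => ℝ) 0 with he
      have h3 : MeasurePreserving (⇑e.symm) (volume : Measure (ℝ × (Fin n → ℝ)))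
          (volume : Measure (Fin (n+1) → ℝ)) := by
        have h4 := hmp.symm e
        rwa [← volume_pi, ← volume_pi, ← Measure.volume_eq_prod] at h4
      refine hprod.transfer h3 ?_
      rintro ⟨a, v⟩ ⟨a', v'⟩
      show e.symm ((a + a') / 2, (2⁻¹:ℝ) • (v + v')) =
        (2⁻¹:ℝ) • (e.symm (a, v) + e.symm (a', v'))
      have hs : ∀ (b : ℝ) (w : Fin n → ℝ), e.symm (b, w) = Fin.cons b w := by
        intro b w
        simp [he, MeasurableEquiv.piFinSuccAbove_symm_apply, Fin.consEquiv]
      rw [hs, hs, hs]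
      funext j
      refine Fin.cases ?_ (fun k => ?_) j
      · simp only [Fin.cons_zero, Pi.smul_apply, Pi.add_apply, smul_eq_mul]
        ring
      · simp only [Fin.cons_succ, Pi.smul_apply, Pi.add_apply, smul_eq_mul]

/-- The midpoint Prékopa–Leindler inequality on a finite-dimensional Euclidean space. -/
lemma midPL_euclidean (E : Type*) [NormedAddCommGroup E] [InnerProductSpace ℝ E]
    [FiniteDimensional ℝ E] [MeasurableSpace E] [BorelSpace E] :
    MidPL (volume : Measure E) (fun x y => (2⁻¹ : ℝ) • (x + y)) := by
  set n := Module.finrank ℝ E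
  -- step 1: pi to EuclideanSpace
  have h1 : MidPL (volume : Measure (EuclideanSpace ℝ (Fin n))) (fun x y => (2⁻¹ : ℝ) • (x + y)) := by
    refine (midPL_pi n).transfer
      (EuclideanSpace.volume_preserving_symm_measurableEquiv_toLp (Fin n)).symm ?_
    intro x y
    rfl
  -- step 2: EuclideanSpace to E
  have B := (stdOrthonormalBasis ℝ E).repr.symm
  refine h1.transfer B.measurePreserving ?_
  intro x y
  simp [map_add, _root_.map_smul]

/-- The function inside the infimum defining `Ssym`. -/
noncomputable def ssymAux {E : Type*} [NormedAddCommGroup E] (f : E → ℝ) (u x : E) : ℝ :=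
  (f (u + x) + f (u - x)) / 2 + ‖u‖ ^ 2 / 2

section SsymLemmas
variable {E : Type*} [NormedAddCommGroup E] [InnerProductSpace ℝ E]
    [FiniteDimensional ℝ E] [MeasurableSpace E] [BorelSpace E]
    {f : E → ℝ} (hf_cont : Continuous f) {c₀ : ℝ} (hc₀ : ∀ x, c₀ ≤ f x)

include hc₀ in
lemma ssymAux_lb : ∀ u x : E, c₀ ≤ ssymAux f u x := by
  intro u x
  have h1 := hc₀ (u + x)
  have h2 := hc₀ (u - x)
  have h3 : (0:ℝ) ≤ ‖u‖ ^ 2 / 2 := by positivity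
  unfold ssymAux; linarith

include hc₀ in
lemma ssymAux_bddBelow (x : E) : BddBelow (range fun u => ssymAux f u x) := by
  exact ⟨c₀, by rintro _ ⟨u, rfl⟩; exact ssymAux_lb hc₀ u x⟩

include hc₀ in
lemma Ssym_le (x u : E) : Ssym f x ≤ ssymAux f u x :=
  ciInf_le (ssymAux_bddBelow hc₀ x) u

include hc₀ in
lemma Ssym_lb (x : E) : c₀ ≤ Ssym f x :=
  le_ciInf fun u => ssymAux_lb hc₀ u x

include hf_cont hc₀ in
lemma Ssym_eq_seq (x : E) :
    Ssym f x = ⨅ n : ℕ, ssymAux f (TopologicalSpace.denseSeq E n) x := by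
  have hψc : Continuous fun u => ssymAux f u x := by
    unfold ssymAux
    fun_prop
  apply le_antisymm
  · exact le_ciInf fun n => Ssym_le hc₀ x _
  · refine le_ciInf fun u => ?_
    refine le_of_forall_pos_le_add fun ε hε => ?_
    have hopen : IsOpen {v : E | ssymAux f v x < ssymAux f u x + ε} :=
      isOpen_lt hψc continuous_const
    have hmem : u ∈ {v : E | ssymAux f v x < ssymAux f u x + ε} := by
      simp only [mem_setOf_eq]; linarith
    obtain ⟨n, hn⟩ := (TopologicalSpace.denseRange_denseSeq E).exists_mem_open hopen ⟨u, hmem⟩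
    calc (⨅ n : ℕ, ssymAux f (TopologicalSpace.denseSeq E n) x)
        ≤ ssymAux f (TopologicalSpace.denseSeq E n) x := by
          apply ciInf_le
          exact ⟨c₀, by rintro _ ⟨m, rfl⟩; exact ssymAux_lb hc₀ _ x⟩
      _ ≤ ssymAux f u x + ε := le_of_lt hn

include hf_cont hc₀ in
lemma Ssym_exp_eq (x : E) :
    ENNReal.ofReal (Real.exp (-Ssym f x)) =
      ⨆ n : ℕ, ENNReal.ofReal (Real.exp (-(ssymAux f (TopologicalSpace.denseSeq E n) x))) := by
  rw [Ssym_eq_seq hf_cont hc₀ x]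
  have hstep1 := Antitone.map_ciInf_of_continuousAt
    (f := fun r : ℝ => Real.exp (-r))
    (g := fun n : ℕ => ssymAux f (TopologicalSpace.denseSeq E n) x)
    ((Real.continuous_exp.comp continuous_neg).continuousAt)
    (fun a b hab => Real.exp_le_exp.2 (neg_le_neg hab))
    ⟨c₀, by rintro _ ⟨m, rfl⟩; exact ssymAux_lb hc₀ _ x⟩
  rw [hstep1]
  exact Monotone.map_ciSup_of_continuousAt
    (f := ENNReal.ofReal)
    (g := fun n : ℕ => Real.exp (-(ssymAux f (TopologicalSpace.denseSeq E n) x)))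
    (ENNReal.continuous_ofReal.continuousAt)
    (fun a b hab => ENNReal.ofReal_le_ofReal hab)
    ⟨Real.exp (-c₀), by
      rintro _ ⟨m, rfl⟩
      exact Real.exp_le_exp.2 (neg_le_neg (ssymAux_lb hc₀ _ x))⟩

include hf_cont hc₀ in
lemma Ssym_exp_measurable :
    Measurable fun x : E => ENNReal.ofReal (Real.exp (-Ssym f x)) := by
  have : (fun x : E => ENNReal.ofReal (Real.exp (-Ssym f x))) = fun x =>
      ⨆ n : ℕ, ENNReal.ofReal (Real.exp (-(ssymAux f (TopologicalSpace.denseSeq E n) x))) :=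
    funext fun x => Ssym_exp_eq hf_cont hc₀ x
  rw [this]
  refine Measurable.iSup fun n => ?_
  have : Continuous fun x : E => ssymAux f (TopologicalSpace.denseSeq E n) x := by
    unfold ssymAux; fun_prop
  exact (ENNReal.continuous_ofReal.comp ((Real.continuous_exp).comp this.neg)).measurable

end SsymLemmas

/-- Symmetrisation decreases `∫ e^{-f} dγ`: for every continuous `f` bounded from
below, `∫ e^{-f} dγ ≤ ∫ e^{-Sf} dγ`. -/
theorem lintegral_exp_neg_le_symmetrisation
    {E : Type*} [NormedAddCommGroup E] [InnerProductSpace ℝ E]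
    [FiniteDimensional ℝ E] [MeasurableSpace E] [BorelSpace E]
    (f : E → ℝ) (hf_cont : Continuous f) (hf_bdd : BddBelow (Set.range f)) :
    (∫⁻ x, ENNReal.ofReal (Real.exp (-f x)) ∂gaussOf E) ≤
      ∫⁻ x, ENNReal.ofReal (Real.exp (-Ssym f x)) ∂gaussOf E := by
  obtain ⟨c₀, hc₀'⟩ := hf_bdd
  have hc₀ : ∀ x, c₀ ≤ f x := fun x => hc₀' ⟨x, rfl⟩
  set c : ℝ := (2 * π) ^ (-(Module.finrank ℝ E : ℝ) / 2) with hcdef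
  have hcpos : 0 < c := Real.rpow_pos_of_pos (by positivity) _
  set ρ : E → ℝ≥0∞ := fun x => ENNReal.ofReal (c * Real.exp (-‖x‖ ^ 2 / 2)) with hρdef
  have hρm : Measurable ρ := by
    apply (ENNReal.continuous_ofReal.comp ?_).measurable
    fun_prop
  have hfm : Measurable fun x : E => ENNReal.ofReal (Real.exp (-f x)) := by
    apply (ENNReal.continuous_ofReal.comp ?_).measurable
    fun_prop
  have hSm := Ssym_exp_measurable hf_cont hc₀
  rw [gaussOf, lintegral_withDensity_eq_lintegral_mul _ hρm hfm,
    lintegral_withDensity_eq_lintegral_mul _ hρm hSm]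
  set F : E → ℝ≥0∞ := fun x => ρ x * ENNReal.ofReal (Real.exp (-f x)) with hFdef
  set H : E → ℝ≥0∞ := fun x => ρ x * ENNReal.ofReal (Real.exp (-Ssym f x)) with hHdef
  set G : E → ℝ≥0∞ := fun z => F (-z) with hGdef
  have hFm : Measurable F := hρm.mul hfm
  have hHm : Measurable H := hρm.mul hSm
  have hGm : Measurable G := hFm.comp measurable_neg
  -- the real pointwise inequality
  have hreal : ∀ y z : E,
      (c * Real.exp (-‖y‖^2/2) * Real.exp (-f y)) *
        (c * Real.exp (-‖z‖^2/2) * Real.exp (-f (-z))) ≤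
      (c * Real.exp (-‖(2⁻¹:ℝ) • (y+z)‖^2/2) *
        Real.exp (-Ssym f ((2⁻¹:ℝ) • (y+z))))^2 := by
    intro y z
    set m : E := (2⁻¹:ℝ) • (y+z) with hmdef
    set u : E := (2⁻¹:ℝ) • (y-z) with hudef
    have hum : u + m = y := by rw [hudef, hmdef]; module
    have hum' : u - m = -z := by rw [hudef, hmdef]; module
    have hS := Ssym_le hc₀ m u
    rw [ssymAux, hum, hum'] at hS
    -- parallelogram
    have hnu : ‖u‖^2 = ‖y - z‖^2 / 4 := by
      rw [hudef, norm_smul]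
      simp [Real.norm_eq_abs]
      ring
    have hnm : ‖m‖^2 = ‖y + z‖^2 / 4 := by
      rw [hmdef, norm_smul]
      simp [Real.norm_eq_abs]
      ring
    have hpar := parallelogram_law_with_norm ℝ y z
    have hexp : -‖y‖^2/2 + -f y + (-‖z‖^2/2 + -f (-z)) ≤
        2 * (-‖m‖^2/2 + -Ssym f m) := by
      nlinarith [hS, hnu, hnm, hpar]
    calc (c * Real.exp (-‖y‖^2/2) * Real.exp (-f y)) *
          (c * Real.exp (-‖z‖^2/2) * Real.exp (-f (-z)))
        = c^2 * Real.exp (-‖y‖^2/2 + -f y + (-‖z‖^2/2 + -f (-z))) := by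
          rw [Real.exp_add, Real.exp_add, Real.exp_add]; ring
      _ ≤ c^2 * Real.exp (2 * (-‖m‖^2/2 + -Ssym f m)) := by
          have := Real.exp_le_exp.2 hexp
          nlinarith [Real.exp_pos (-‖y‖^2/2 + -f y + (-‖z‖^2/2 + -f (-z))),
            Real.exp_pos (2 * (-‖m‖^2/2 + -Ssym f m)), sq_nonneg c]
      _ = (c * Real.exp (-‖m‖^2/2) * Real.exp (-Ssym f m))^2 := by
          rw [show (2:ℝ) * (-‖m‖^2/2 + -Ssym f m) =
            (-‖m‖^2/2 + -Ssym f m) + (-‖m‖^2/2 + -Ssym f m) by ring,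
            Real.exp_add, Real.exp_add]
          ring
  -- the ENNReal pointwise inequality
  have hFx : ∀ x : E, F x = ENNReal.ofReal (c * Real.exp (-‖x‖^2/2) * Real.exp (-f x)) :=
    fun x => (ENNReal.ofReal_mul (by positivity)).symm
  have hHx : ∀ x : E, H x = ENNReal.ofReal (c * Real.exp (-‖x‖^2/2) * Real.exp (-Ssym f x)) :=
    fun x => (ENNReal.ofReal_mul (by positivity)).symm
  have key : ∀ y z : E, F y * G z ≤ H ((2⁻¹:ℝ) • (y + z)) ^ 2 := by
    intro y z
    rw [hGdef]
    simp only []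
    rw [hFx y, hFx (-z), hHx, ← ENNReal.ofReal_mul (by positivity),
      ← ENNReal.ofReal_pow (by positivity)]
    apply ENNReal.ofReal_le_ofReal
    rw [norm_neg]
    exact hreal y z
  have hmain := midPL_euclidean E F G H hFm hGm hHm key
  have hGF : ∫⁻ z, G z = ∫⁻ x, F x := by
    rw [hGdef]
    exact (Measure.measurePreserving_neg (volume : Measure E)).lintegral_comp hFm
  rw [hGF] at hmain
  -- conclude
  by_contra hlt
  push_neg at hlt
  have h2 : (∫⁻ x, H x) ^ 2 < (∫⁻ x, F x) ^ 2 :=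
    ENNReal.pow_lt_pow_left two_ne_zero hlt
  rw [← sq] at hmain
  have := lt_of_le_of_lt hmain h2
  exact lt_irrefl _ this
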